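/- arXiv:1107.4699 — 2 statements merged into one kernel-verified Lean document; each statement's English description precedes it below -/
import Mathlib

section
/- The common refinement of finitely many P-primary congruences on a commutative monoid Q is P-primary. -/
/-! The common refinement of finitely many `P`-primary congruences on a
commutative monoid is `P`-primary. -/

variable {Q : Type*} [AddCommMonoid Q]

/-- An element is nil if it is absorbing. -/
def IsNilElem {M : Type*} [AddCommMonoid M] (x : M) : Prop := ∀ q : M, q + x = x

/-- An element is nilpotent if some positive multiple of it is nil. -/
def IsNilpotentElem {M : Type*} [AddCommMonoid M] (x : M) : Prop :=
  ∃ n : ℕ, 0 < n ∧ IsNilElem (n • x)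

/-- An element is cancellative if addition by it is injective. -/
def IsCancellativeElem {M : Type*} [AddCommMonoid M] (x : M) : Prop :=
  ∀ a b : M, x + a = x + b → a = b

/-- An ideal of a monoid: closed under addition of arbitrary elements. -/
def IsMonIdeal (T : Set Q) : Prop := ∀ t ∈ T, ∀ q : Q, t + q ∈ T

/-- A prime ideal of a monoid. -/
def IsMonPrime (P : Set Q) : Prop :=
  IsMonIdeal P ∧ ∀ t s : Q, t + s ∈ P → t ∈ P ∨ s ∈ P

/-- The nilpotent ideal of a congruence: elements with nilpotent image in the
quotient monoid. -/
def nilpotentIdeal (c : AddCon Q) : Set Q := {q : Q | IsNilpotentElem (c.mk' q)}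

/-- A congruence is `P`-primary if it is primary (every element of the
quotient is nilpotent or cancellative) with nilpotent ideal `P`. -/
def IsPPrimary (P : Set Q) (c : AddCon Q) : Prop :=
  (∀ x : c.Quotient, IsNilpotentElem x ∨ IsCancellativeElem x) ∧
    nilpotentIdeal c = P


lemma nil_add' {M : Type*} [AddCommMonoid M] {x : M} (hx : IsNilElem x) (y : M) :
    IsNilElem (y + x) := by
  intro a; rw [hx y]; exact hx a

lemma nil_nsmul' {M : Type*} [AddCommMonoid M] {x : M} (hx : IsNilElem x) {k : ℕ}
    (hk : 0 < k) : IsNilElem (k • x) := by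
  obtain ⟨k, rfl⟩ := Nat.exists_eq_succ_of_ne_zero hk.ne'
  rw [succ_nsmul]
  exact nil_add' hx _

lemma nilElem_mk_iff {M : Type*} [AddCommMonoid M] (c : AddCon M) (x : M) :
    IsNilElem ((x : c.Quotient)) ↔ ∀ a : M, c (a + x) x := by
  constructor
  · intro h a
    have := h (a : c.Quotient)
    rwa [← AddCon.coe_add, AddCon.eq] at this
  · intro h z
    induction z using AddCon.induction_on with
    | H a =>
      rw [← AddCon.coe_add, AddCon.eq]
      exact h a

lemma nilpotent_mk_iff {M : Type*} [AddCommMonoid M] (c : AddCon M) (x : M) :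
    IsNilpotentElem (c.mk' x) ↔ ∃ m : ℕ, 0 < m ∧ ∀ a : M, c (a + m • x) (m • x) := by
  unfold IsNilpotentElem
  constructor
  · rintro ⟨m, hm, hnil⟩
    refine ⟨m, hm, ?_⟩
    rw [← map_nsmul] at hnil
    exact (nilElem_mk_iff c (m • x)).1 hnil
  · rintro ⟨m, hm, h⟩
    refine ⟨m, hm, ?_⟩
    rw [← map_nsmul]
    exact (nilElem_mk_iff c (m • x)).2 h

/-- The common refinement of finitely many `P`-primary congruences is
`P`-primary. -/
theorem common_refinement_PPrimary (P : Set Q) (hP : IsMonPrime P)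
    (n : ℕ) (hn : 0 < n) (c : Fin n → AddCon Q)
    (hc : ∀ i, IsPPrimary P (c i))
    (d : AddCon Q) (hd : ∀ x y : Q, d x y ↔ ∀ i, c i x y) :
    IsPPrimary P d := by
  have key : nilpotentIdeal d = P := by
    ext q
    constructor
    · intro hq
      rw [← (hc ⟨0, hn⟩).2]
      rw [nilpotentIdeal, Set.mem_setOf_eq, nilpotent_mk_iff] at hq ⊢
      obtain ⟨m, hm, h⟩ := hq
      exact ⟨m, hm, fun a => ((hd _ _).1 (h a)) ⟨0, hn⟩⟩
    · intro hq
      have hqi : ∀ i, ∃ m : ℕ, 0 < m ∧ ∀ a : Q, (c i) (a + m • q) (m • q) := by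
        intro i
        have : q ∈ nilpotentIdeal (c i) := by rw [(hc i).2]; exact hq
        rw [nilpotentIdeal, Set.mem_setOf_eq, nilpotent_mk_iff] at this
        exact this
      choose m hm hnil using hqi
      set N : ℕ := ∏ i, m i with hN
      have hNpos : 0 < N := Finset.prod_pos fun i _ => hm i
      rw [nilpotentIdeal, Set.mem_setOf_eq, nilpotent_mk_iff]
      refine ⟨N, hNpos, fun a => ?_⟩
      rw [hd]
      intro i
      have hdvd : m i ∣ N := Finset.dvd_prod_of_mem m (Finset.mem_univ i)
      obtain ⟨k, hk⟩ := hdvd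
      have hkpos : 0 < k := by
        rcases Nat.eq_zero_or_pos k with h0 | h0
        · exfalso; rw [h0, Nat.mul_zero] at hk; omega
        · exact h0
      have hnilq : IsNilElem ((N • q : Q) : (c i).Quotient) := by
        have base : IsNilElem ((m i • q : Q) : (c i).Quotient) :=
          (nilElem_mk_iff (c i) (m i • q)).2 (hnil i)
        have : ((N • q : Q) : (c i).Quotient) = k • ((m i • q : Q) : (c i).Quotient) := by
          show (c i).mk' (N • q) = k • (c i).mk' (m i • q)
          rw [← map_nsmul ((c i).mk' : Q →+ (c i).Quotient), ← mul_nsmul]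
          congr 1
          rw [hk, Nat.mul_comm]
        rw [this]
        exact nil_nsmul' base hkpos
      exact (nilElem_mk_iff (c i) (N • q)).1 hnilq a
  refine ⟨?_, key⟩
  intro x
  induction x using AddCon.induction_on with
  | H q =>
    by_cases hq : q ∈ P
    · left
      have : q ∈ nilpotentIdeal d := by rw [key]; exact hq
      exact this
    · right
      intro a b hab
      induction a using AddCon.induction_on with
      | H a =>
        induction b using AddCon.induction_on with
        | H b =>
          rw [← AddCon.coe_add, ← AddCon.coe_add, AddCon.eq] at hab
          have hab' : ∀ i, (c i) (q + a) (q + b) := (hd _ _).1 hab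
          rw [AddCon.eq, hd]
          intro i
          have hcanc : IsCancellativeElem ((q : (c i).Quotient)) := by
            rcases (hc i).1 (q : (c i).Quotient) with hnil | hcanc
            · exfalso
              apply hq
              rw [← (hc i).2]
              exact hnil
            · exact hcanc
          have := hcanc (a : (c i).Quotient) (b : (c i).Quotient)
            (by rw [← AddCon.coe_add, ← AddCon.coe_add, AddCon.eq]; exact hab' i)
          rwa [AddCon.eq] at this
end

section
/- For a binomial ideal I in the group algebra k[Φ] of a finitely generated abelian group Φ over a field k: if I is proper, then there exist a subgroup L ⊆ Φ and a group homomorphism (character) ρ: L → k* such that I is generated by the elements 1 − ρ(u)⁻¹ t^u for u ∈ L; equivalently I = ⟨t^u − ρ(u − v) t^v : u − v ∈ L⟩. -/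
/-! Every proper binomial ideal of the group algebra `k[Φ]` of a finitely
generated abelian group `Φ` is of the form
`I_ρ = ⟨t^u − ρ(u − v) t^v : u − v ∈ L⟩` for a subgroup `L ⊆ Φ` and a
character `ρ : L → k*`. -/

variable {k : Type*} [Field k] {Φ : Type*} [AddCommGroup Φ]

/-- The monomial `t^u` in the group algebra `k[Φ]`. -/
noncomputable def mono (k : Type*) [Field k] {Φ : Type*} [AddCommMonoid Φ] (u : Φ) :
    AddMonoidAlgebra k Φ := AddMonoidAlgebra.single u 1

/-- A binomial ideal is one generated by binomials `t^u − λ t^v`, `λ ∈ k`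
possibly `0`. -/
def IsBinomialIdeal (I : Ideal (AddMonoidAlgebra k Φ)) : Prop :=
  ∃ S : Set (AddMonoidAlgebra k Φ), I = Ideal.span S ∧
    ∀ f ∈ S, ∃ (u v : Φ) (lam : k), f = mono k u - lam • mono k v

namespace BinomialAux

theorem smul_single_one (v : Φ) (c : k) :
    c • (AddMonoidAlgebra.single v 1 : AddMonoidAlgebra k Φ) = AddMonoidAlgebra.single v c := by
  rw [AddMonoidAlgebra.smul_single, smul_eq_mul, mul_one]

theorem key_mul (v w : Φ) (c : k) :
    (AddMonoidAlgebra.single v 1 : AddMonoidAlgebra k Φ) *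
      (AddMonoidAlgebra.single w 1 - AddMonoidAlgebra.single 0 c)
      = AddMonoidAlgebra.single (w + v) 1 - AddMonoidAlgebra.single v c := by
  simp only [mul_sub, AddMonoidAlgebra.single_mul_single, one_mul, mul_one, add_zero]
  rw [add_comm v w]

/-- `single u c` with `c ≠ 0` is a unit in the group algebra. -/
theorem isUnit_single (u : Φ) {c : k} (hc : c ≠ 0) :
    IsUnit (AddMonoidAlgebra.single u c : AddMonoidAlgebra k Φ) := by
  refine ⟨⟨AddMonoidAlgebra.single u c, AddMonoidAlgebra.single (-u) c⁻¹, ?_, ?_⟩, rfl⟩ <;>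
    rw [AddMonoidAlgebra.single_mul_single] <;>
    simp [hc, AddMonoidAlgebra.one_def, mul_inv_cancel₀, inv_mul_cancel₀]

variable (I : Ideal (AddMonoidAlgebra k Φ))

/-- The basic relation: `t^w - c ∈ I`. -/
def P (w : Φ) (c : k) : Prop :=
  (AddMonoidAlgebra.single w 1 - AddMonoidAlgebra.single 0 c : AddMonoidAlgebra k Φ) ∈ I

theorem P_uniq (hproper : I ≠ ⊤) {w : Φ} {c d : k} (hc : P I w c) (hd : P I w d) : c = d := by
  by_contra hne
  have hmem : (AddMonoidAlgebra.single 0 (c - d) : AddMonoidAlgebra k Φ) ∈ I := by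
    have h2 := I.sub_mem hd hc
    rw [sub_sub_sub_cancel_left, ← AddMonoidAlgebra.single_sub] at h2
    exact h2
  exact hproper (Ideal.eq_top_of_isUnit_mem I hmem (isUnit_single 0 (sub_ne_zero.mpr hne)))

theorem P_add {u v : Φ} {c d : k} (hu : P I u c) (hv : P I v d) : P I (u + v) (c * d) := by
  have h1 := I.add_mem (I.mul_mem_left (AddMonoidAlgebra.single v 1) hu)
    (I.mul_mem_left (AddMonoidAlgebra.single 0 c) hv)
  rw [key_mul, mul_sub, AddMonoidAlgebra.single_mul_single,
    AddMonoidAlgebra.single_mul_single, zero_add, zero_add, mul_one] at h1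
  have h2 : AddMonoidAlgebra.single (u + v) 1 - AddMonoidAlgebra.single v c +
      (AddMonoidAlgebra.single v c - AddMonoidAlgebra.single 0 (c * d))
      = AddMonoidAlgebra.single (u + v) (1 : k) - AddMonoidAlgebra.single 0 (c * d) := by abel
  rw [h2] at h1
  exact h1

theorem P_neg {u : Φ} {c : k} (hc : c ≠ 0) (hu : P I u c) : P I (-u) c⁻¹ := by
  have h1 := I.mul_mem_left (AddMonoidAlgebra.single (-u) c⁻¹) hu
  rw [mul_sub, AddMonoidAlgebra.single_mul_single, AddMonoidAlgebra.single_mul_single,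
    neg_add_cancel, add_zero, mul_one, inv_mul_cancel₀ hc] at h1
  have h2 := I.neg_mem h1
  rw [neg_sub] at h2
  exact h2

/-- The subgroup `L` of exponents occurring in `I`. -/
def L : AddSubgroup Φ where
  carrier := {w | ∃ c : kˣ, P I w c}
  zero_mem' := ⟨1, by simp [P]⟩
  add_mem' := by
    rintro a b ⟨c, hc⟩ ⟨d, hd⟩
    exact ⟨c * d, by simpa using P_add I hc hd⟩
  neg_mem' := by
    rintro a ⟨c, hc⟩
    exact ⟨c⁻¹, by simpa using P_neg I c.ne_zero hc⟩

/-- The character value at `w ∈ L`. -/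
noncomputable def rhoFun (w : L I) : kˣ := Classical.choose w.2

theorem rhoFun_spec (w : L I) : P I w (rhoFun I w) := Classical.choose_spec w.2

/-- The character `ρ`. -/
noncomputable def rho (hproper : I ≠ ⊤) : Multiplicative (L I) →* kˣ where
  toFun x := rhoFun I x.toAdd
  map_one' := by
    apply Units.ext
    have h1 : P I (((1 : Multiplicative (L I)).toAdd : L I) : Φ) (1 : k) := by simp [P]
    exact P_uniq I hproper (rhoFun_spec I _) h1
  map_mul' x y := by
    apply Units.ext
    have h1 := P_add I (rhoFun_spec I x.toAdd) (rhoFun_spec I y.toAdd)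
    exact P_uniq I hproper (rhoFun_spec I (x * y).toAdd) h1

end BinomialAux

open BinomialAux in
/-- Every proper binomial ideal `I ⊆ k[Φ]`, `Φ` a finitely generated abelian
group, equals `I_ρ = ⟨t^u − ρ(u − v) t^v : u − v ∈ L⟩` for some subgroup
`L ⊆ Φ` and character `ρ : L → k*`. -/
theorem binomial_ideal_in_group_algebra_is_Irho [AddGroup.FG Φ]
    (I : Ideal (AddMonoidAlgebra k Φ))
    (hbin : IsBinomialIdeal I) (hproper : I ≠ ⊤) :
    ∃ (L : AddSubgroup Φ) (ρ : Multiplicative L →* kˣ),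
      I = Ideal.span {f : AddMonoidAlgebra k Φ | ∃ (u v : Φ) (h : u - v ∈ L),
        f = mono k u -
          ((ρ (Multiplicative.ofAdd (⟨u - v, h⟩ : L)) : kˣ) : k) • mono k v} := by
  obtain ⟨S, hIS, hS⟩ := hbin
  refine ⟨L I, rho I hproper, le_antisymm ?_ ?_⟩
  · -- I ⊆ span
    conv_lhs => rw [hIS]
    apply Ideal.span_le.mpr
    intro f hf
    obtain ⟨u, v, lam, rfl⟩ := hS f hf
    have hfI : mono k u - lam • mono k v ∈ I := hIS ▸ Ideal.subset_span hf
    have hlam : lam ≠ 0 := by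
      rintro rfl
      refine hproper (Ideal.eq_top_of_isUnit_mem I ?_ (isUnit_single u one_ne_zero))
      simpa [mono] using hfI
    have hP : P I (u - v) lam := by
      have h0 : mono k u - lam • mono k v
          = AddMonoidAlgebra.single u 1 - AddMonoidAlgebra.single v lam := by
        rw [mono, mono, smul_single_one]
      have h1 := I.mul_mem_left (AddMonoidAlgebra.single (-v) 1) hfI
      rw [h0, mul_sub, AddMonoidAlgebra.single_mul_single, AddMonoidAlgebra.single_mul_single,
        one_mul, one_mul, neg_add_cancel, add_comm (-v) u, ← sub_eq_add_neg] at h1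
      exact h1
    have hmem : u - v ∈ L I := ⟨Units.mk0 lam hlam, hP⟩
    apply Ideal.subset_span
    refine ⟨u, v, hmem, ?_⟩
    have heq : ((rho I hproper (Multiplicative.ofAdd (⟨u - v, hmem⟩ : L I)) : kˣ) : k) = lam :=
      P_uniq I hproper (rhoFun_spec I ⟨u - v, hmem⟩) hP
    rw [heq]
  · -- span ⊆ I
    apply Ideal.span_le.mpr
    rintro f ⟨u, v, hmem, rfl⟩
    set c : k := ((rho I hproper (Multiplicative.ofAdd (⟨u - v, hmem⟩ : L I)) : kˣ) : k) with hc
    have hP : P I (u - v) c := rhoFun_spec I ⟨u - v, hmem⟩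
    have h1 := I.mul_mem_left (AddMonoidAlgebra.single v 1) hP
    rw [key_mul, sub_add_cancel] at h1
    have h2 : (AddMonoidAlgebra.single u 1 - AddMonoidAlgebra.single v c : AddMonoidAlgebra k Φ)
        = mono k u - c • mono k v := by
      rw [mono, mono, smul_single_one]
    rw [h2] at h1
    exact h1
end
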